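/- Let ε ∈ ℝⁿ and Z be a real n × k matrix with ZᵀD_ε²Z invertible; set V := Z(ZᵀD_ε²Z)⁻¹Zᵀ and P := D_ε V D_ε. Then for every index i: V_{ii}(1 − 3P_{ii} + 4P_{ii}²) − 2·Σ_{j=1}^n V_{ij}² ε_j² P_{ij}² ≥ V_{ii}(1 − P_{ii})(1 − 2P_{ii})². In particular, since 0 ≤ P_{ii} ≤ 1 and V_{ii} ≥ 0, the left-hand side is nonnegative. -/

import Mathlib

open Matrix

/-- `V = Z (Zᵀ D_ε² Z)⁻¹ Zᵀ`. -/
noncomputable def Vmat {n k : ℕ} (ε : Fin n → ℝ) (Z : Matrix (Fin n) (Fin k) ℝ) :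
    Matrix (Fin n) (Fin n) ℝ :=
  Z * (Zᵀ * Matrix.diagonal (fun i => ε i ^ 2) * Z)⁻¹ * Zᵀ

/-- `P = D_ε V D_ε`. -/
noncomputable def Pmat {n k : ℕ} (ε : Fin n → ℝ) (Z : Matrix (Fin n) (Fin k) ℝ) :
    Matrix (Fin n) (Fin n) ℝ :=
  Matrix.diagonal ε * Vmat ε Z * Matrix.diagonal ε

/-- The lower bound `cᵢ ≥ Vᵢᵢ(1 − Pᵢᵢ)(1 − 2Pᵢᵢ)²` used in the proof of Lemma 1:
`Vᵢᵢ(1 − 3Pᵢᵢ + 4Pᵢᵢ²) − 2 Σⱼ Vᵢⱼ² εⱼ² Pᵢⱼ² ≥ Vᵢᵢ(1 − Pᵢᵢ)(1 − 2Pᵢᵢ)² ≥ 0`. -/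
theorem stmt_11 {n k : ℕ} (ε : Fin n → ℝ) (Z : Matrix (Fin n) (Fin k) ℝ)
    (hinv : IsUnit (Zᵀ * Matrix.diagonal (fun i => ε i ^ 2) * Z)) (i : Fin n) :
    Vmat ε Z i i * (1 - 3 * Pmat ε Z i i + 4 * (Pmat ε Z i i) ^ 2)
        - 2 * ∑ j, (Vmat ε Z i j) ^ 2 * (ε j) ^ 2 * (Pmat ε Z i j) ^ 2
      ≥ Vmat ε Z i i * (1 - Pmat ε Z i i) * (1 - 2 * Pmat ε Z i i) ^ 2 ∧
    0 ≤ Vmat ε Z i i * (1 - 3 * Pmat ε Z i i + 4 * (Pmat ε Z i i) ^ 2)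
        - 2 * ∑ j, (Vmat ε Z i j) ^ 2 * (ε j) ^ 2 * (Pmat ε Z i j) ^ 2 := by
  classical
  set Dsq := Matrix.diagonal (fun i => ε i ^ 2) with hDsq
  set A := Zᵀ * Dsq * Z with hAdef
  have hAdet : IsUnit A.det := (Matrix.isUnit_iff_isUnit_det _).mp hinv
  have hVdef : Vmat ε Z = Z * A⁻¹ * Zᵀ := rfl
  have hinvA : A⁻¹ * A = 1 := Matrix.nonsing_inv_mul A hAdet
  have hVDV : Vmat ε Z * Dsq * Vmat ε Z = Vmat ε Z := by
    rw [hVdef]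
    have h : Z * A⁻¹ * Zᵀ * Dsq * (Z * A⁻¹ * Zᵀ) = Z * (A⁻¹ * A * A⁻¹) * Zᵀ := by
      rw [hAdef]; simp only [Matrix.mul_assoc]
    rw [h, hinvA, Matrix.one_mul]
  have hAT : Aᵀ = A := by
    rw [hAdef, hDsq]
    simp [Matrix.transpose_mul, Matrix.diagonal_transpose, Matrix.mul_assoc]
  have hVT : (Vmat ε Z)ᵀ = Vmat ε Z := by
    rw [hVdef]
    rw [Matrix.transpose_mul, Matrix.transpose_mul, Matrix.transpose_transpose,
        Matrix.transpose_nonsing_inv, hAT, Matrix.mul_assoc]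
  have hVsym : ∀ a b, Vmat ε Z a b = Vmat ε Z b a := by
    intro a b
    conv_lhs => rw [← hVT]
    exact Matrix.transpose_apply _ _ _
  have hPapp : ∀ a b, Pmat ε Z a b = ε a * Vmat ε Z a b * ε b := by
    intro a b
    show (Matrix.diagonal ε * Vmat ε Z * Matrix.diagonal ε) a b = _
    rw [Matrix.mul_diagonal, Matrix.diagonal_mul]
  -- Σⱼ Vᵢⱼ² εⱼ² = Vᵢᵢ
  have hsum : ∑ j, Vmat ε Z i j ^ 2 * ε j ^ 2 = Vmat ε Z i i := by
    have h := congrFun (congrFun hVDV i) i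
    rw [Matrix.mul_apply] at h
    rw [← h]
    refine Finset.sum_congr rfl fun j _ => ?_
    rw [hDsq, Matrix.mul_diagonal, hVsym j i]
    ring
  -- P idempotent
  have hDD : Matrix.diagonal ε * Matrix.diagonal ε = Dsq := by
    rw [Matrix.diagonal_mul_diagonal, hDsq]
    congr 1; funext j; ring
  have hPP : Pmat ε Z * Pmat ε Z = Pmat ε Z := by
    show (Matrix.diagonal ε * Vmat ε Z * Matrix.diagonal ε) *
        (Matrix.diagonal ε * Vmat ε Z * Matrix.diagonal ε)
      = Matrix.diagonal ε * Vmat ε Z * Matrix.diagonal ε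
    have h2 : (Matrix.diagonal ε * Vmat ε Z * Matrix.diagonal ε) *
        (Matrix.diagonal ε * Vmat ε Z * Matrix.diagonal ε)
      = Matrix.diagonal ε * (Vmat ε Z * (Matrix.diagonal ε * Matrix.diagonal ε) * Vmat ε Z) *
          Matrix.diagonal ε := by
      simp only [Matrix.mul_assoc]
    rw [h2, hDD, hVDV]
  have hp2 : ∑ j, Pmat ε Z i j ^ 2 = Pmat ε Z i i := by
    have h := congrFun (congrFun hPP i) i
    rw [Matrix.mul_apply] at h
    rw [← h]
    refine Finset.sum_congr rfl fun j _ => ?_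
    have hps : Pmat ε Z j i = Pmat ε Z i j := by
      rw [hPapp, hPapp, hVsym j i]; ring
    rw [hps]; ring
  have hpii : Pmat ε Z i i = ε i ^ 2 * Vmat ε Z i i := by
    rw [hPapp i i]; ring
  have hv0 : 0 ≤ Vmat ε Z i i := by
    rw [← hsum]; exact Finset.sum_nonneg fun j _ => by positivity
  have hpsq : Pmat ε Z i i ^ 2 ≤ Pmat ε Z i i := by
    have h := Finset.single_le_sum (f := fun j => Pmat ε Z i j ^ 2)
      (fun j _ => sq_nonneg _) (Finset.mem_univ i)
    rwa [hp2] at h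
  have hp0 : 0 ≤ Pmat ε Z i i := le_trans (sq_nonneg _) hpsq
  have hple : Pmat ε Z i i ≤ 1 := by nlinarith [hpsq, hp0]
  -- split sums off diagonal
  have hrest1 := Finset.sum_erase_add Finset.univ
      (fun j => Vmat ε Z i j ^ 2 * ε j ^ 2) (Finset.mem_univ i)
  rw [hsum] at hrest1
  have hsplit1 : ∑ j ∈ Finset.univ.erase i, Vmat ε Z i j ^ 2 * ε j ^ 2
      = Vmat ε Z i i * (1 - Pmat ε Z i i) := by
    have hfi : Vmat ε Z i i ^ 2 * ε i ^ 2 = Vmat ε Z i i * Pmat ε Z i i := by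
      rw [hpii]; ring
    linarith [hrest1, hfi]
  have hrest2 := Finset.sum_erase_add Finset.univ
      (fun j => Pmat ε Z i j ^ 2) (Finset.mem_univ i)
  rw [hp2] at hrest2
  have hPb : ∀ j ∈ Finset.univ.erase i,
      Pmat ε Z i j ^ 2 ≤ Pmat ε Z i i - Pmat ε Z i i ^ 2 := by
    intro j hj
    have hle : Pmat ε Z i j ^ 2 ≤ ∑ j ∈ Finset.univ.erase i, Pmat ε Z i j ^ 2 :=
      Finset.single_le_sum (f := fun j => Pmat ε Z i j ^ 2) (fun j _ => sq_nonneg _) hj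
    linarith [hrest2, hle]
  -- bound the off-diagonal part of the sum
  have hT : ∑ j ∈ Finset.univ.erase i, Vmat ε Z i j ^ 2 * ε j ^ 2 * Pmat ε Z i j ^ 2
      ≤ (Vmat ε Z i i * (1 - Pmat ε Z i i)) * (Pmat ε Z i i - Pmat ε Z i i ^ 2) := by
    calc ∑ j ∈ Finset.univ.erase i, Vmat ε Z i j ^ 2 * ε j ^ 2 * Pmat ε Z i j ^ 2
        ≤ ∑ j ∈ Finset.univ.erase i,
            Vmat ε Z i j ^ 2 * ε j ^ 2 * (Pmat ε Z i i - Pmat ε Z i i ^ 2) := by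
          refine Finset.sum_le_sum fun j hj => ?_
          have h2 : (0:ℝ) ≤ Vmat ε Z i j ^ 2 * ε j ^ 2 := by positivity
          exact mul_le_mul_of_nonneg_left (hPb j hj) h2
      _ = (∑ j ∈ Finset.univ.erase i, Vmat ε Z i j ^ 2 * ε j ^ 2) *
            (Pmat ε Z i i - Pmat ε Z i i ^ 2) := by rw [← Finset.sum_mul]
      _ = (Vmat ε Z i i * (1 - Pmat ε Z i i)) * (Pmat ε Z i i - Pmat ε Z i i ^ 2) := by
          rw [hsplit1]
  have hSsplit := Finset.sum_erase_add Finset.univ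
      (fun j => Vmat ε Z i j ^ 2 * ε j ^ 2 * Pmat ε Z i j ^ 2) (Finset.mem_univ i)
  have hfi2 : Vmat ε Z i i ^ 2 * ε i ^ 2 * Pmat ε Z i i ^ 2
      = Vmat ε Z i i * Pmat ε Z i i ^ 3 := by rw [hpii]; ring
  have hfin : ∑ j, Vmat ε Z i j ^ 2 * ε j ^ 2 * Pmat ε Z i j ^ 2
      ≤ Vmat ε Z i i * Pmat ε Z i i *
        (1 - 2 * Pmat ε Z i i + 2 * Pmat ε Z i i ^ 2) := by
    nlinarith [hT, hSsplit, hfi2]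
  have hpart1 : Vmat ε Z i i * (1 - 3 * Pmat ε Z i i + 4 * (Pmat ε Z i i) ^ 2)
        - 2 * ∑ j, (Vmat ε Z i j) ^ 2 * (ε j) ^ 2 * (Pmat ε Z i j) ^ 2
      ≥ Vmat ε Z i i * (1 - Pmat ε Z i i) * (1 - 2 * Pmat ε Z i i) ^ 2 := by
    nlinarith [hfin]
  refine ⟨hpart1, ?_⟩
  have hrhs : 0 ≤ Vmat ε Z i i * (1 - Pmat ε Z i i) * (1 - 2 * Pmat ε Z i i) ^ 2 :=
    mul_nonneg (mul_nonneg hv0 (by linarith)) (sq_nonneg _)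
  linarith [hpart1, hrhs]
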